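/- arXiv:1602.05069 — 3 statements merged into one kernel-verified Lean document; each statement's English description precedes it below -/
import Mathlib

section
/- Let r ≥ 1 be an integer and d : Fin r → ℝ with d₁ ≥ d₂ ≥ ⋯ ≥ d_r > 0 (the eigenvalues, arranged in descending order, of the sample covariance matrix normalized by the noise power). Let ε > 0 satisfy ε ≤ min(1, 1/dᵢ) for every i. Define λ* by λᵢ* = min(1, 1/dᵢ). Then λ* belongs to the feasible set F = {λ : Fin r → ℝ | λ₁ ≤ λ₂ ≤ ⋯ ≤ λ_r and ε ≤ λᵢ ≤ 1 for all i}, and for every λ ∈ F one has Σᵢ dᵢ λᵢ* − Σᵢ log λᵢ* ≤ Σᵢ dᵢ λᵢ − Σᵢ log λᵢ; that is, λ* is a global minimizer of λ ↦ Σᵢ dᵢλᵢ − Σᵢ log λᵢ over F. -/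
lemma rcml_pointwise (d x : ℝ) (hd : 0 < d) (hx : 0 < x) (hx1 : x ≤ 1) :
    d * min 1 (1 / d) - Real.log (min 1 (1 / d)) ≤ d * x - Real.log x := by
  have hlogx : Real.log x ≤ x - 1 := Real.log_le_sub_one_of_pos hx
  rcases le_total (1 / d) 1 with h | h
  · rw [min_eq_right h]
    have hdx : 0 < d * x := mul_pos hd hx
    have h2 : Real.log (d * x) ≤ d * x - 1 := Real.log_le_sub_one_of_pos hdx
    rw [Real.log_mul (ne_of_gt hd) (ne_of_gt hx)] at h2
    have : d * (1 / d) = 1 := by field_simp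
    rw [this, Real.log_div one_ne_zero (ne_of_gt hd), Real.log_one]
    linarith
  · rw [min_eq_left h]
    have hd1 : d ≤ 1 := by
      rw [le_div_iff₀ hd, one_mul] at h; exact h
    rw [Real.log_one]
    nlinarith

/-- Lemma 3.1 (RCML, known noise level): `λᵢ* = min(1, 1/dᵢ)` is feasible and globally
minimizes `λ ↦ Σᵢ dᵢλᵢ − Σᵢ log λᵢ` over the feasible set
`{λ | λ₁ ≤ ⋯ ≤ λ_r, ε ≤ λᵢ ≤ 1}`. -/
theorem rcml_closed_form_known_noise
    (r : ℕ) (hr : 1 ≤ r) (d : Fin r → ℝ)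
    (hd_desc : ∀ i j : Fin r, i ≤ j → d j ≤ d i)
    (hd_pos : ∀ i, 0 < d i)
    (ε : ℝ) (hε : 0 < ε) (hεle : ∀ i, ε ≤ min 1 (1 / d i)) :
    ((∀ i j : Fin r, i ≤ j →
        min 1 (1 / d i) ≤ min 1 (1 / d j)) ∧
      (∀ i, ε ≤ min 1 (1 / d i) ∧ min 1 (1 / d i) ≤ 1)) ∧
    ∀ l : Fin r → ℝ,
      ((∀ i j : Fin r, i ≤ j → l i ≤ l j) ∧ (∀ i, ε ≤ l i ∧ l i ≤ 1)) →
      (∑ i, d i * min 1 (1 / d i)) - (∑ i, Real.log (min 1 (1 / d i))) ≤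
        (∑ i, d i * l i) - (∑ i, Real.log (l i)) := by
  refine ⟨⟨fun i j hij => ?_, fun i => ⟨hεle i, min_le_left _ _⟩⟩, fun l ⟨hmono, hbox⟩ => ?_⟩
  · exact min_le_min le_rfl (one_div_le_one_div_of_le (hd_pos j) (hd_desc i j hij))
  · rw [← Finset.sum_sub_distrib, ← Finset.sum_sub_distrib]
    apply Finset.sum_le_sum
    intro i _
    exact rcml_pointwise (d i) (l i) (hd_pos i) (lt_of_lt_of_le hε (hbox i).1) (hbox i).2
end

section
/- Let N > r ≥ 1 be integers, d : Fin N → ℝ with d₁ ≥ d₂ ≥ ⋯ ≥ d_N > 0, and ĉ > 0. For c > 0 define Gᵢ(c) = 1 + log dᵢ if c ≤ dᵢ and Gᵢ(c) = dᵢ/c + log c if c > dᵢ, for i = 1,…,r; and Gᵢ(c) = dᵢ/c + log c for i = r+1,…,N. Let d̂ = (Σ_{i=r+1}^N dᵢ)/(N−r) and set c* = ĉ if ĉ > d̂ and c* = d̂ if ĉ ≤ d̂. Then c* minimizes G(c) = Σ_{i=1}^N Gᵢ(c) over {c : c ≥ ĉ}, i.e., G(c*) ≤ G(c) for all c ≥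 ĉ. -/
private lemma rcml_aux2 {a c : ℝ} (ha : 0 < a) (hc : 0 < c) :
    1 + Real.log a ≤ a / c + Real.log c := by
  have h := Real.log_le_sub_one_of_pos (div_pos ha hc)
  rw [Real.log_div ha.ne' hc.ne'] at h
  linarith

private lemma rcml_aux1 {a c1 c2 : ℝ} (hc1 : 0 < c1) (h12 : c1 ≤ c2) (ha : 0 ≤ a)
    (hac : a ≤ c1) :
    a / c1 + Real.log c1 ≤ a / c2 + Real.log c2 := by
  have hc2 : 0 < c2 := hc1.trans_le h12
  have h := Real.log_le_sub_one_of_pos (div_pos hc1 hc2)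
  rw [Real.log_div hc1.ne' hc2.ne'] at h
  have e : a / c2 + (1 - c1 / c2) - a / c1 = (c1 - a) * (c2 - c1) / (c1 * c2) := by
    field_simp; ring
  have hpos : 0 ≤ (c1 - a) * (c2 - c1) / (c1 * c2) :=
    div_nonneg (mul_nonneg (by linarith) (by linarith)) (by positivity)
  linarith

/-- Lemma 3.2: closed-form optimal noise level in the RCML_LB estimator.
With `d̂` the mean of the `N − r` smallest eigenvalues, the minimizer of
`G(c) = Σᵢ Gᵢ(c)` over `{c : c ≥ ĉ}` is `c* = max(ĉ, d̂)` (equal to `ĉ` when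
`ĉ > d̂` and to `d̂` when `ĉ ≤ d̂`). -/
theorem rcml_lb_optimal_noise_level
    (N r : ℕ) (hr : 1 ≤ r) (hrN : r < N) (d : Fin N → ℝ)
    (hd_desc : ∀ i j : Fin N, i ≤ j → d j ≤ d i)
    (hd_pos : ∀ i, 0 < d i)
    (chat : ℝ) (hchat : 0 < chat) :
    let G : ℝ → ℝ := fun c => ∑ i : Fin N,
      (if (i : ℕ) < r then
        (if c ≤ d i then 1 + Real.log (d i) else d i / c + Real.log c)
      else d i / c + Real.log c)
    let dhat : ℝ :=
      (∑ i ∈ Finset.univ.filter (fun i : Fin N => r ≤ (i : ℕ)), d i) / ((N : ℝ) - r)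
    let cstar : ℝ := if dhat < chat then chat else dhat
    chat ≤ cstar ∧ ∀ c : ℝ, chat ≤ c → G cstar ≤ G c := by
  intro G dhat cstar
  set Tt := Finset.univ.filter (fun i : Fin N => r ≤ (i : ℕ)) with hTt
  set Th := Finset.univ.filter (fun i : Fin N => (i : ℕ) < r) with hTh
  have hMnat : (Tt.card : ℕ) = N - r := by
    have : Tt = Finset.Ici (⟨r, hrN⟩ : Fin N) := by
      ext i; simp [hTt, Finset.mem_Ici, Fin.le_def]
    rw [this, Fin.card_Ici]
  have hMpos : (0:ℝ) < (N : ℝ) - r := by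
    have : (r : ℝ) < N := by exact_mod_cast hrN
    linarith
  have hM : (Tt.card : ℝ) = (N : ℝ) - r := by
    rw [hMnat]; push_cast [Nat.cast_sub hrN.le]; ring
  set S := ∑ i ∈ Tt, d i with hS
  have hSpos : 0 < S := by
    apply Finset.sum_pos (fun i _ => hd_pos i)
    exact ⟨⟨r, hrN⟩, by simp [hTt]⟩
  have hdhat : dhat = S / ((N : ℝ) - r) := rfl
  have hdhat_pos : 0 < dhat := by rw [hdhat]; positivity
  -- dhat ≤ d i for every i with (i : ℕ) < r
  have hdr : ∀ i ∈ Th, dhat ≤ d i := by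
    intro i hi
    have hir : (i : ℕ) < r := by simpa [hTh] using hi
    have hub : S ≤ ((N : ℝ) - r) * d ⟨r, hrN⟩ := by
      rw [← hM]
      calc S ≤ ∑ _j ∈ Tt, d ⟨r, hrN⟩ := by
              apply Finset.sum_le_sum
              intro j hj
              exact hd_desc ⟨r, hrN⟩ j (by simpa [hTt, Fin.le_def] using hj)
        _ = (Tt.card : ℝ) * d ⟨r, hrN⟩ := by rw [Finset.sum_const, nsmul_eq_mul]
    have h1 : dhat ≤ d ⟨r, hrN⟩ := by
      rw [hdhat, div_le_iff₀ hMpos]; linarith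
    have h2 : d ⟨r, hrN⟩ ≤ d i := hd_desc i ⟨r, hrN⟩ (by simp [Fin.le_def]; omega)
    linarith
  -- the head sum
  set H : ℝ → ℝ := fun c => ∑ i ∈ Th,
      (if c ≤ d i then 1 + Real.log (d i) else d i / c + Real.log c) with hH
  -- splitting G
  have hGsplit : ∀ c : ℝ, 0 < c →
      G c = H c + ((N : ℝ) - r) * (dhat / c + Real.log c) := by
    intro c hc
    have hsplit := Finset.sum_filter_add_sum_filter_not Finset.univ
      (fun i : Fin N => (i : ℕ) < r)
      (fun i => if (i : ℕ) < r then
        (if c ≤ d i then 1 + Real.log (d i) else d i / c + Real.log c)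
      else d i / c + Real.log c)
    have e1 : (∑ i ∈ Th, (if (i : ℕ) < r then
        (if c ≤ d i then 1 + Real.log (d i) else d i / c + Real.log c)
      else d i / c + Real.log c)) = H c := by
      apply Finset.sum_congr rfl
      intro i hi
      have : (i : ℕ) < r := by simpa [hTh] using hi
      simp [this]
    have e2 : (∑ i ∈ Finset.univ.filter (fun i : Fin N => ¬ (i : ℕ) < r),
        (if (i : ℕ) < r then
        (if c ≤ d i then 1 + Real.log (d i) else d i / c + Real.log c)
      else d i / c + Real.log c)) = ((N : ℝ) - r) * (dhat / c + Real.log c) := by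
      have hset : Finset.univ.filter (fun i : Fin N => ¬ (i : ℕ) < r) = Tt := by
        ext i; simp [hTt, Nat.not_lt]
      rw [hset]
      have : (∑ i ∈ Tt, (if (i : ℕ) < r then
          (if c ≤ d i then 1 + Real.log (d i) else d i / c + Real.log c)
        else d i / c + Real.log c)) = ∑ i ∈ Tt, (d i / c + Real.log c) := by
        apply Finset.sum_congr rfl
        intro i hi
        have : r ≤ (i : ℕ) := by simpa [hTt] using hi
        simp [Nat.not_lt.mpr this]
      rw [this, Finset.sum_add_distrib, ← Finset.sum_div, Finset.sum_const, nsmul_eq_mul,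
        hM, ← hS, hdhat]
      field_simp
    show (∑ i : Fin N, _) = _
    rw [← hsplit, e1, e2]
  -- monotonicity of head terms and lower bound
  have Hmono : ∀ c1 c2 : ℝ, 0 < c1 → c1 ≤ c2 → H c1 ≤ H c2 := by
    intro c1 c2 hc1 h12
    apply Finset.sum_le_sum
    intro i _
    have hdi := hd_pos i
    by_cases h1 : c1 ≤ d i <;> by_cases h2 : c2 ≤ d i <;> simp only [h1, h2, if_true, if_false]
    · exact le_refl _
    · exact rcml_aux2 hdi (hc1.trans_le h12)
    · exact absurd (h12.trans h2) h1
    · exact rcml_aux1 hc1 h12 hdi.le (le_of_not_ge h1)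
  have Hlow : ∀ c : ℝ, 0 < c → H dhat ≤ H c := by
    intro c hc
    apply Finset.sum_le_sum
    intro i hi
    have hdi := hd_pos i
    have h1 : dhat ≤ d i := hdr i hi
    simp only [h1, if_true]
    by_cases h2 : c ≤ d i
    · simp [h2]
    · simp only [h2, if_false]
      exact rcml_aux2 hdi hc
  -- tail facts
  have Tmin : ∀ c : ℝ, 0 < c →
      ((N : ℝ) - r) * (dhat / dhat + Real.log dhat) ≤ ((N : ℝ) - r) * (dhat / c + Real.log c) := by
    intro c hc
    apply mul_le_mul_of_nonneg_left _ hMpos.le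
    rw [div_self hdhat_pos.ne']
    exact rcml_aux2 hdhat_pos hc
  have Tmono : ∀ c1 c2 : ℝ, dhat ≤ c1 → c1 ≤ c2 →
      ((N : ℝ) - r) * (dhat / c1 + Real.log c1) ≤ ((N : ℝ) - r) * (dhat / c2 + Real.log c2) := by
    intro c1 c2 h1 h12
    exact mul_le_mul_of_nonneg_left
      (rcml_aux1 (hdhat_pos.trans_le h1) h12 hdhat_pos.le h1) hMpos.le
  have hcstar_pos : 0 < cstar := by
    show (0:ℝ) < if dhat < chat then chat else dhat
    split_ifs <;> [exact hchat; exact hdhat_pos]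
  constructor
  · show chat ≤ if dhat < chat then chat else dhat
    split_ifs with h
    · exact le_refl _
    · exact not_lt.mp h
  · intro c hc
    have hcpos : 0 < c := hchat.trans_le hc
    rw [hGsplit cstar hcstar_pos, hGsplit c hcpos]
    by_cases h : dhat < chat
    · have hcs : cstar = chat := if_pos h
      rw [hcs]
      exact add_le_add (Hmono chat c hchat hc) (Tmono chat c h.le hc)
    · have hcs : cstar = dhat := if_neg h
      rw [hcs]
      exact add_le_add (Hlow c hcpos) (Tmin c hcpos)
end

section
/- Let N ≥ 1 be an integer, σ² > 0, and d : Fin N → ℝ with dₖ > 0 for all k. For 0 ≤ i ≤ N define lr(i) = exp(N) · σ^{−2(N−i)} · (Π_{k=i+1}^N d_k) / exp(i + σ^{−2} Σ_{k=i+1}^N d_k). Then lr is monotone nondecreasing: lr(i) ≤ lr(i+1) for all 0 ≤ i < N. -/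
/-- Lemma 1 of the expected-likelihood chapter: the likelihood-ratio value of the
RCML estimator is monotone nondecreasing in the assumed clutter rank. -/
theorem lr_monotone_in_rank
    (N : ℕ) (hN : 1 ≤ N) (σ2 : ℝ) (hσ2 : 0 < σ2)
    (d : Fin N → ℝ) (hd : ∀ k, 0 < d k) :
    let lr : ℕ → ℝ := fun i =>
      Real.exp N * (σ2 ^ (N - i))⁻¹ *
        (∏ k ∈ Finset.univ.filter (fun k : Fin N => i ≤ (k : ℕ)), d k) /
        Real.exp ((i : ℝ) + σ2⁻¹ *
          ∑ k ∈ Finset.univ.filter (fun k : Fin N => i ≤ (k : ℕ)), d k)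
    ∀ i : ℕ, i < N → lr i ≤ lr (i + 1) := by
  intro lr i hi
  simp only [lr]
  set ι : Fin N := ⟨i, hi⟩ with hι
  have hfilter : Finset.univ.filter (fun k : Fin N => i ≤ (k : ℕ)) =
      insert ι (Finset.univ.filter (fun k : Fin N => i + 1 ≤ (k : ℕ))) := by
    ext k
    simp only [Finset.mem_filter, Finset.mem_univ, true_and, Finset.mem_insert, Fin.ext_iff, hι]
    omega
  have hnotmem : ι ∉ Finset.univ.filter (fun k : Fin N => i + 1 ≤ (k : ℕ)) := by
    simp [hι]
  rw [hfilter, Finset.prod_insert hnotmem, Finset.sum_insert hnotmem]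
  set P := ∏ k ∈ Finset.univ.filter (fun k : Fin N => i + 1 ≤ (k : ℕ)), d k with hPdef
  set S := ∑ k ∈ Finset.univ.filter (fun k : Fin N => i + 1 ≤ (k : ℕ)), d k with hSdef
  have hP : 0 < P := Finset.prod_pos (fun k _ => hd k)
  have hdι : 0 < d ι := hd ι
  have hpow : σ2 ^ (N - i) = σ2 ^ (N - (i + 1)) * σ2 := by
    rw [← pow_succ]
    congr 1
    omega
  have hexp : Real.exp ((i : ℝ) + σ2⁻¹ * (d ι + S)) =
      Real.exp (((i + 1 : ℕ) : ℝ) + σ2⁻¹ * S) * Real.exp (σ2⁻¹ * d ι - 1) := by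
    rw [← Real.exp_add]
    push_cast
    ring_nf
  rw [hpow, hexp]
  have hkey : d ι ≤ σ2 * Real.exp (σ2⁻¹ * d ι - 1) := by
    have h1 : σ2⁻¹ * d ι ≤ Real.exp (σ2⁻¹ * d ι - 1) := by
      have := Real.add_one_le_exp (σ2⁻¹ * d ι - 1)
      linarith
    calc d ι = σ2 * (σ2⁻¹ * d ι) := by field_simp
    _ ≤ σ2 * Real.exp (σ2⁻¹ * d ι - 1) := by
        exact mul_le_mul_of_nonneg_left h1 hσ2.le
  have hE : 0 < Real.exp (((i + 1 : ℕ) : ℝ) + σ2⁻¹ * S) := Real.exp_pos _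
  have hEx : 0 < Real.exp (σ2⁻¹ * d ι - 1) := Real.exp_pos _
  have hpw : 0 < σ2 ^ (N - (i + 1)) := pow_pos hσ2 _
  have heN : 0 < Real.exp (N : ℝ) := Real.exp_pos _
  rw [div_le_div_iff₀ (by positivity) (by positivity)]
  have hfac : 0 < Real.exp (N : ℝ) * (σ2 ^ (N - (i + 1)))⁻¹ * P *
      Real.exp (((i + 1 : ℕ) : ℝ) + σ2⁻¹ * S) := by positivity
  calc Real.exp (N : ℝ) * (σ2 ^ (N - (i + 1)) * σ2)⁻¹ * (d ι * P) *
        Real.exp (((i + 1 : ℕ) : ℝ) + σ2⁻¹ * S)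
      = (Real.exp (N : ℝ) * (σ2 ^ (N - (i + 1)))⁻¹ * P *
          Real.exp (((i + 1 : ℕ) : ℝ) + σ2⁻¹ * S)) * (σ2⁻¹ * d ι) := by
        field_simp
    _ ≤ (Real.exp (N : ℝ) * (σ2 ^ (N - (i + 1)))⁻¹ * P *
          Real.exp (((i + 1 : ℕ) : ℝ) + σ2⁻¹ * S)) * Real.exp (σ2⁻¹ * d ι - 1) := by
        apply mul_le_mul_of_nonneg_left _ hfac.le
        have := Real.add_one_le_exp (σ2⁻¹ * d ι - 1)
        linarith
    _ = Real.exp (N : ℝ) * (σ2 ^ (N - (i + 1)))⁻¹ * P *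
          (Real.exp (((i + 1 : ℕ) : ℝ) + σ2⁻¹ * S) * Real.exp (σ2⁻¹ * d ι - 1)) := by
        ring
end
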